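/- Let β > 0, 0 < c < 1, and m, n ∈ ℕ. Then for all x ∈ ℝ, M_{m+n}(x; β, c) = Σ_{k=0}^{min(n,m)} ((−n)_k (−m)_k (β+x)_k / (k! (β)_k (β+n)_k)) · ((c−1)/c)^k · M_{n−k}(x; β+k, c) · M_{m−k}(x−n; β+n+k, c). -/

import Mathlib

open Finset

/-- Pochhammer symbol `(a)_j = a(a+1)⋯(a+j-1)`. -/
noncomputable def poch (a : ℝ) (j : ℕ) : ℝ := ∏ i ∈ Finset.range j, (a + i)

/-- Meixner polynomial `M_n(x; β, c)`. -/
noncomputable def meixnerM (n : ℕ) (x β c : ℝ) : ℝ :=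
  ∑ k ∈ Finset.range (n + 1),
    poch (-(n : ℝ)) k * poch (-x) k / (poch β k * (k.factorial : ℝ)) * ((c - 1) / c) ^ k

lemma poch_zero (a : ℝ) : poch a 0 = 1 := by simp [poch]

lemma poch_succ (a : ℝ) (n : ℕ) : poch a (n + 1) = poch a n * (a + n) := by
  simp [poch, Finset.prod_range_succ]

lemma poch_succ' (a : ℝ) (n : ℕ) : poch a (n + 1) = a * poch (a + 1) n := by
  rw [poch, Finset.prod_range_succ' (fun i => a + (i : ℕ)) n, poch]
  have h1 : (∏ i ∈ range n, (a + ((i + 1 : ℕ) : ℝ))) = ∏ i ∈ range n, (a + 1 + (i : ℕ)) := by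
    apply Finset.prod_congr rfl
    intro i _
    push_cast
    ring
  rw [h1]
  push_cast
  ring

lemma poch_add (a : ℝ) (p q : ℕ) : poch a (p + q) = poch a p * poch (a + p) q := by
  rw [poch, Finset.prod_range_add, poch, poch]
  congr 1
  apply Finset.prod_congr rfl
  intro i _
  push_cast
  ring

lemma poch_pos {a : ℝ} (ha : 0 < a) (n : ℕ) : 0 < poch a n := by
  apply Finset.prod_pos
  intro i _
  positivity

lemma poch_neg_nat (N k : ℕ) (h : N < k) : poch (-(N : ℝ)) k = 0 := by
  apply Finset.prod_eq_zero (i := N) (Finset.mem_range.2 h)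
  simp

lemma poch_vandermonde (u v : ℝ) (s : ℕ) :
    poch (u + v) s = ∑ q ∈ range (s + 1), (s.choose q : ℝ) * poch u q * poch v (s - q) := by
  induction s with
  | zero => simp [poch]
  | succ s ih =>
    rw [Finset.sum_range_succ' _ (s + 1)]
    have key : ∀ k ∈ range (s + 1),
        ((s + 1).choose (k + 1) : ℝ) * poch u (k + 1) * poch v (s + 1 - (k + 1)) =
          (s.choose k : ℝ) * poch u (k + 1) * poch v (s - k)
          + (s.choose (k + 1) : ℝ) * poch u (k + 1) * poch v (s - k) := by
      intro k _
      rw [Nat.choose_succ_succ]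
      push_cast [Nat.succ_eq_add_one]
      ring
    rw [Finset.sum_congr rfl key, Finset.sum_add_distrib]
    have hS2 : (∑ k ∈ range (s + 1), (s.choose (k + 1) : ℝ) * poch u (k + 1) * poch v (s - k))
        + ((s + 1).choose 0 : ℝ) * poch u 0 * poch v (s + 1 - 0) =
        ∑ k ∈ range (s + 1), (s.choose k : ℝ) * poch u k * poch v (s + 1 - k) := by
      have htop : (∑ k ∈ range (s + 1 + 1), (s.choose k : ℝ) * poch u k * poch v (s + 1 - k)) =
          ∑ k ∈ range (s + 1), (s.choose k : ℝ) * poch u k * poch v (s + 1 - k) := by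
        rw [Finset.sum_range_succ]
        simp [Nat.choose_eq_zero_of_lt]
      rw [← htop, Finset.sum_range_succ' _ (s + 1)]
      simp
    rw [add_assoc, hS2]
    have key2 : ∀ k ∈ range (s + 1),
        (s.choose k : ℝ) * poch u (k + 1) * poch v (s - k)
          + (s.choose k : ℝ) * poch u k * poch v (s + 1 - k) =
        ((s.choose k : ℝ) * poch u k * poch v (s - k)) * (u + v + s) := by
      intro k hk
      have hk' : k ≤ s := by simpa [Nat.lt_succ_iff] using hk
      have h1 : s + 1 - k = (s - k) + 1 := by omega
      rw [h1, poch_succ, poch_succ]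
      have : ((s - k : ℕ) : ℝ) = (s : ℝ) - k := by
        push_cast [Nat.cast_sub hk']
        ring
      rw [this]
      ring
    rw [← Finset.sum_add_distrib, Finset.sum_congr rfl key2, ← Finset.sum_mul, ← ih, poch_succ]

lemma poch_W (q : ℕ) : ∀ c u : ℝ,
    ∑ k ∈ range (q + 1), (-1 : ℝ) ^ k * (q.choose k : ℝ) * poch u k * poch (c + k) (q - k) =
      poch (c - u) q := by
  induction q with
  | zero => intro c u; simp [poch]
  | succ q ih =>
    intro c u
    have hA1 : ∀ c' : ℝ, ∑ k ∈ range (q + 1),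
        (-1 : ℝ) ^ k * (q.choose k : ℝ) * poch u k * poch (c' + k) (q + 1 - k) =
        (c' + q) * poch (c' - u) q := by
      intro c'
      rw [← ih c' u, Finset.mul_sum]
      apply Finset.sum_congr rfl
      intro k hk
      have hk' : k ≤ q := by simpa [Nat.lt_succ_iff] using hk
      have h1 : q + 1 - k = (q - k) + 1 := by omega
      rw [h1, poch_succ]
      have : ((q - k : ℕ) : ℝ) = (q : ℝ) - k := by push_cast [Nat.cast_sub hk']; ring
      rw [this]
      ring
    -- split by Pascal
    have key : ∀ k ∈ range (q + 1 + 1),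
        (-1 : ℝ) ^ k * ((q + 1).choose k : ℝ) * poch u k * poch (c + k) (q + 1 - k) =
          (-1 : ℝ) ^ k * (q.choose k : ℝ) * poch u k * poch (c + k) (q + 1 - k)
          + (-1 : ℝ) ^ k * (q.choose (k - 1) : ℝ) * poch u k * poch (c + k) (q + 1 - k) *
              (if k = 0 then 0 else 1) := by
      intro k hk
      cases k with
      | zero => simp
      | succ k =>
        rw [Nat.choose_succ_succ]
        push_cast [Nat.succ_eq_add_one]
        simp
        ring
    rw [Finset.sum_congr rfl key, Finset.sum_add_distrib]
    have e1 : ∑ k ∈ range (q + 1 + 1),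
        (-1 : ℝ) ^ k * (q.choose k : ℝ) * poch u k * poch (c + k) (q + 1 - k) =
        (c + q) * poch (c - u) q := by
      rw [Finset.sum_range_succ]
      simp [Nat.choose_eq_zero_of_lt, hA1 c]
    have e2 : ∑ k ∈ range (q + 1 + 1),
        (-1 : ℝ) ^ k * (q.choose (k - 1) : ℝ) * poch u k * poch (c + k) (q + 1 - k) *
            (if k = 0 then 0 else 1) =
        -((c + q) * poch (c - u) q) + (c - u) * poch (c + 1 - u) q := by
      rw [Finset.sum_range_succ' _ (q + 1)]
      simp only [if_neg (Nat.succ_ne_zero _), Nat.add_sub_cancel, mul_one, if_pos rfl, mul_zero,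
        add_zero]
      have step : ∀ k ∈ range (q + 1),
          (-1 : ℝ) ^ (k + 1) * (q.choose k : ℝ) * poch u (k + 1) * poch (c + ↑(k + 1)) (q + 1 - (k + 1)) =
          -((-1 : ℝ) ^ k * (q.choose k : ℝ) * poch u k * poch (c + k) (q + 1 - k))
          - (u - c) * ((-1 : ℝ) ^ k * (q.choose k : ℝ) * poch u k * poch ((c + 1) + k) (q - k)) := by
        intro k hk
        have hk' : k ≤ q := by simpa [Nat.lt_succ_iff] using hk
        have h1 : q + 1 - (k + 1) = q - k := by omega
        have h2 : q + 1 - k = (q - k) + 1 := by omega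
        rw [h1, h2, poch_succ u k, poch_succ' (c + k) (q - k)]
        have harg : c + (k : ℝ) + 1 = c + 1 + k := by ring
        have harg2 : c + ((k + 1 : ℕ) : ℝ) = c + 1 + k := by push_cast; ring
        rw [harg, harg2]
        ring
      rw [Finset.sum_congr rfl step, Finset.sum_sub_distrib, Finset.sum_neg_distrib]
      rw [← Finset.mul_sum, ih (c + 1) u]
      have e3 : ∑ k ∈ range (q + 1),
          (-1 : ℝ) ^ k * (q.choose k : ℝ) * poch u k * poch (c + k) (q + 1 - k) =
          (c + q) * poch (c - u) q := hA1 c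
      rw [e3]
      simp
      ring
    rw [e1, e2]
    have : poch (c - u) (q + 1) = (c - u) * poch (c - u + 1) q := poch_succ' _ _
    rw [this]
    have harg : c - u + 1 = c + 1 - u := by ring
    rw [harg]
    ring

lemma sum_triangle (f : ℕ → ℕ → ℝ) (N : ℕ) :
    ∑ s ∈ range (N + 1), ∑ i ∈ range (s + 1), f i (s - i) =
      ∑ i ∈ range (N + 1), ∑ t ∈ range (N + 1 - i), f i t := by
  induction N with
  | zero => simp
  | succ N ih =>
    rw [Finset.sum_range_succ (fun s => ∑ i ∈ range (s + 1), f i (s - i)) (N + 1), ih]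
    rw [Finset.sum_range_succ (fun i => ∑ t ∈ range (N + 1 + 1 - i), f i t) (N + 1)]
    have h1 : ∀ i ∈ range (N + 1), ∑ t ∈ range (N + 1 + 1 - i), f i t =
        ∑ t ∈ range (N + 1 - i), f i t + f i (N + 1 - i) := by
      intro i hi
      have h : N + 1 + 1 - i = (N + 1 - i) + 1 := by
        have := Finset.mem_range.1 hi; omega
      rw [h, Finset.sum_range_succ]
    rw [Finset.sum_congr rfl h1, Finset.sum_add_distrib]
    have h2 : ∑ i ∈ range (N + 1 + 1), f i (N + 1 - i) =
        ∑ i ∈ range (N + 1), f i (N + 1 - i) + f (N + 1) 0 := by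
      rw [Finset.sum_range_succ]
      norm_num
    rw [h2]
    have h3 : ∑ t ∈ range (N + 1 + 1 - (N + 1)), f (N + 1) t = f (N + 1) 0 := by
      norm_num
    rw [h3]
    ring

lemma poch_saalschutz (a b c : ℝ) (q : ℕ) :
    ∑ k ∈ range (q + 1), (q.choose k : ℝ) * poch a k * poch b k * poch (c - a - b) (q - k) *
        poch (c + k) (q - k) =
      poch (c - a) q * poch (c - b) q := by
  have hb : ∀ k : ℕ, poch b k =
      ∑ i ∈ range (k + 1), (-1 : ℝ) ^ i * (k.choose i : ℝ) * poch (c - b) i * poch (c + i) (k - i) := by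
    intro k
    rw [poch_W k c (c - b)]
    congr 1
    ring
  set F : ℕ → ℕ → ℝ := fun i t =>
    (-1 : ℝ) ^ i * (q.choose (i + t) : ℝ) * ((i + t).choose i : ℝ) * poch a (i + t) *
      poch (c - b) i * poch (c + i) t * poch (c - a - b) (q - (i + t)) *
      poch (c + i + t) (q - (i + t)) with hF
  have step1 : ∑ k ∈ range (q + 1), (q.choose k : ℝ) * poch a k * poch b k *
      poch (c - a - b) (q - k) * poch (c + k) (q - k) =
      ∑ k ∈ range (q + 1), ∑ i ∈ range (k + 1), F i (k - i) := by
    apply Finset.sum_congr rfl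
    intro k _
    rw [hb k, Finset.mul_sum, Finset.sum_mul, Finset.sum_mul]
    apply Finset.sum_congr rfl
    intro i hi
    have hik : i ≤ k := by simpa [Nat.lt_succ_iff] using hi
    rw [hF]
    simp only
    have e1 : i + (k - i) = k := by omega
    rw [e1]
    have e2 : ((k - i : ℕ) : ℝ) = (k : ℝ) - i := by
      push_cast [Nat.cast_sub hik]; ring
    rw [e2]
    have e3 : c + (i : ℝ) + ((k : ℝ) - i) = c + k := by ring
    rw [e3]
    ring
  rw [step1, sum_triangle F q]
  have step2 : ∀ i ∈ range (q + 1), ∑ t ∈ range (q + 1 - i), F i t =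
      (-1 : ℝ) ^ i * (q.choose i : ℝ) * poch a i * poch (c - b) i * poch (c + i) (q - i) *
        poch ((a + i) + (c - a - b)) (q - i) := by
    intro i hi
    have hiq : i ≤ q := by simpa [Nat.lt_succ_iff] using hi
    have hrange : q + 1 - i = (q - i) + 1 := by omega
    rw [hrange]
    rw [poch_vandermonde (a + i) (c - a - b) (q - i), Finset.mul_sum]
    apply Finset.sum_congr rfl
    intro t ht
    have htq : t ≤ q - i := by simpa [Nat.lt_succ_iff] using ht
    rw [hF]
    simp only
    have e1 : q - (i + t) = (q - i) - t := by omega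
    have e2 : (q.choose (i + t) : ℝ) * ((i + t).choose i : ℝ) =
        (q.choose i : ℝ) * ((q - i).choose t : ℝ) := by
      have h5 : i + t - i = t := by omega
      rw [← Nat.cast_mul, ← Nat.cast_mul,
        Nat.choose_mul (show i ≤ i + t by omega), h5]
    have e3 : poch a (i + t) = poch a i * poch (a + i) t := poch_add a i t
    have e4 : poch (c + i) (q - i) = poch (c + i) t * poch (c + i + t) ((q - i) - t) := by
      have : q - i = t + ((q - i) - t) := by omega
      rw [this, poch_add]
      have : (q - i) - ((q-i) - t)= t := by omega
      congr 2 <;> omega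
    rw [e1, e3, e4]
    linear_combination ((-1 : ℝ) ^ i * poch a i * poch (a + (i : ℝ)) t * poch (c - b) i *
      poch (c + (i : ℝ)) t * poch (c + (i : ℝ) + (t : ℝ)) ((q - i) - t) *
      poch (c - a - b) ((q - i) - t)) * e2
  rw [Finset.sum_congr rfl step2]
  have step3 : ∀ i ∈ range (q + 1),
      (-1 : ℝ) ^ i * (q.choose i : ℝ) * poch a i * poch (c - b) i * poch (c + i) (q - i) *
        poch ((a + i) + (c - a - b)) (q - i) =
      poch (c - b) q * ((-1 : ℝ) ^ i * (q.choose i : ℝ) * poch a i * poch (c + i) (q - i)) := by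
    intro i hi
    have hiq : i ≤ q := by simpa [Nat.lt_succ_iff] using hi
    have e1 : (a + (i : ℝ)) + (c - a - b) = (c - b) + i := by ring
    rw [e1]
    have e2 : poch (c - b) q = poch (c - b) i * poch ((c - b) + i) (q - i) := by
      have h : q = i + (q - i) := by omega
      nth_rewrite 1 [h]
      exact poch_add _ _ _
    rw [e2]
    ring
  rw [Finset.sum_congr rfl step3, ← Finset.mul_sum, poch_W q c a]
  ring

lemma poch_nat_sub (i n k : ℕ) (h1 : i ≤ n) (h2 : n - i < k) : poch ((i : ℝ) - n) k = 0 := by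
  apply Finset.prod_eq_zero (i := n - i) (Finset.mem_range.2 h2)
  push_cast [Nat.cast_sub h1]
  ring

set_option maxHeartbeats 2000000 in
theorem burchnall_meixner_expansion_first (β c : ℝ) (hβ : 0 < β) (hc0 : 0 < c) (hc1 : c < 1)
    (m n : ℕ) (x : ℝ) :
    meixnerM (m + n) x β c =
      ∑ k ∈ Finset.range (min n m + 1),
        poch (-(n : ℝ)) k * poch (-(m : ℝ)) k * poch (β + x) k /
            ((k.factorial : ℝ) * poch β k * poch (β + n) k) * ((c - 1) / c) ^ k *
          meixnerM (n - k) x (β + k) c * meixnerM (m - k) (x - n) (β + n + k) c := by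
  have hc : c ≠ 0 := ne_of_gt hc0
  have hfac : ∀ k : ℕ, ((k.factorial : ℝ)) ≠ 0 := fun k => by
    exact_mod_cast Nat.cast_ne_zero.2 (Nat.factorial_ne_zero k)
  have hpoch : ∀ (a : ℝ), 0 < a → ∀ k, poch a k ≠ 0 := fun a ha k => ne_of_gt (poch_pos ha k)
  set z : ℝ := (c - 1) / c with hz
  clear_value z
  set g : ℕ → ℕ → ℝ := fun i q =>
    (((i + q).choose i : ℕ) : ℝ) * poch (-(n : ℝ)) i * poch (-(m : ℝ)) q * poch (-x) (i + q) /
      (poch β (i + q) * ((i + q).factorial : ℝ)) * z ^ (i + q) with hgdef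
  set T3 : ℕ → ℕ → ℕ → ℝ := fun i k j =>
    poch (-(n : ℝ)) i * poch (-(m : ℝ)) (k + j) * poch (-x) i * poch (β + x) k *
      poch ((i : ℝ) - n) k * poch ((n : ℝ) - x) j * poch (β + i + k) j *
      (((k + j).choose k : ℕ) : ℝ) /
      ((i.factorial : ℝ) * ((k + j).factorial : ℝ) * poch β (i + (k + j)) *
        poch (β + n) (k + j)) *
      z ^ (i + (k + j)) with hT3def
  have step1 : meixnerM (m + n) x β c =
      ∑ s ∈ range (m + n + 1), ∑ i ∈ range (s + 1), g i (s - i) := by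
    rw [meixnerM]
    apply Finset.sum_congr rfl
    intro s _
    have harg : (-((m + n : ℕ) : ℝ)) = (-(n : ℝ)) + (-(m : ℝ)) := by push_cast; ring
    rw [harg, poch_vandermonde (-(n : ℝ)) (-(m : ℝ)) s, Finset.sum_mul, Finset.sum_div,
      Finset.sum_mul]
    apply Finset.sum_congr rfl
    intro i hi
    have his : i ≤ s := by simpa [Nat.lt_succ_iff] using hi
    simp only [hgdef]
    have e : i + (s - i) = s := by omega
    rw [e, ← hz]
  have hg1 : ∀ i q : ℕ, n < i → g i q = 0 := by
    intro i q h
    simp only [hgdef]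
    rw [poch_neg_nat n i h]
    ring
  have hg2 : ∀ i q : ℕ, m < q → g i q = 0 := by
    intro i q h
    simp only [hgdef]
    rw [poch_neg_nat m q h]
    ring
  have step3 : (∑ s ∈ range (m + n + 1), ∑ i ∈ range (s + 1), g i (s - i)) =
      ∑ i ∈ range (n + 1), ∑ q ∈ range (m + 1), g i q := by
    rw [sum_triangle g (m + n)]
    have inner : ∀ i ∈ range (m + n + 1),
        ∑ q ∈ range (m + n + 1 - i), g i q = ∑ q ∈ range (m + 1), g i q := by
      intro i _
      by_cases hle : i ≤ n
      · symm
        apply Finset.sum_subset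
        · apply Finset.range_subset_range.2
          omega
        · intro q hq1 hq2
          simp only [Finset.mem_range] at hq1 hq2
          exact hg2 i q (by omega)
      · rw [Finset.sum_eq_zero fun q _ => hg1 i q (by omega),
          Finset.sum_eq_zero fun q _ => hg1 i q (by omega)]
    rw [Finset.sum_congr rfl inner]
    symm
    apply Finset.sum_subset
    · apply Finset.range_subset_range.2
      omega
    · intro i hi1 hi2
      simp only [Finset.mem_range] at hi1 hi2
      exact Finset.sum_eq_zero fun q _ => hg1 i q (by omega)
  have step4 : ∀ i q : ℕ, g i q = ∑ k ∈ range (q + 1), T3 i k (q - k) := by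
    intro i q
    have ps := poch_saalschutz (β + x) ((i : ℝ) - n) (β + i) q
    rw [show β + (i : ℝ) - (β + x) - ((i : ℝ) - n) = (n : ℝ) - x by ring,
      show β + (i : ℝ) - (β + x) = (i : ℝ) - x by ring,
      show β + (i : ℝ) - ((i : ℝ) - n) = β + (n : ℝ) by ring] at ps
    have hBn : poch (β + (n : ℝ)) q ≠ 0 := hpoch _ (by positivity) q
    have hcf : ((i + q).choose i : ℝ) * (i.factorial : ℝ) * (q.factorial : ℝ) =
        ((i + q).factorial : ℝ) := by
      have h := Nat.choose_mul_factorial_mul_factorial (Nat.le_add_right i q)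
      rw [Nat.add_sub_cancel_left] at h
      exact_mod_cast h
    have hch : ((i + q).choose i : ℝ) ≠ 0 :=
      Nat.cast_ne_zero.2 (Nat.choose_pos (Nat.le_add_right i q)).ne'
    symm
    calc ∑ k ∈ range (q + 1), T3 i k (q - k)
        = ∑ k ∈ range (q + 1),
            (((i + q).choose i : ℝ) * poch (-(n : ℝ)) i * poch (-(m : ℝ)) q * poch (-x) i /
              (poch β (i + q) * ((i + q).factorial : ℝ) * poch (β + (n : ℝ)) q) * z ^ (i + q)) *
            ((q.choose k : ℝ) * poch (β + x) k * poch ((i : ℝ) - n) k * poch ((n : ℝ) - x) (q - k) *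
              poch (β + (i : ℝ) + k) (q - k)) := by
          apply Finset.sum_congr rfl
          intro k hk
          have hkq : k ≤ q := by simpa [Nat.lt_succ_iff] using hk
          simp only [hT3def]
          rw [show k + (q - k) = q by omega, ← hcf]
          field_simp [hch, hfac, hpoch β hβ, hBn]
      _ = (((i + q).choose i : ℝ) * poch (-(n : ℝ)) i * poch (-(m : ℝ)) q * poch (-x) i /
              (poch β (i + q) * ((i + q).factorial : ℝ) * poch (β + (n : ℝ)) q) * z ^ (i + q)) *
            (poch ((i : ℝ) - x) q * poch (β + (n : ℝ)) q) := by
          rw [← Finset.mul_sum, ps]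
      _ = g i q := by
          simp only [hgdef]
          rw [poch_add (-x) i q, show -x + (i : ℝ) = (i : ℝ) - x by ring]
          field_simp [hch, hfac, hpoch β hβ, hBn]
  have step7 : (∑ k ∈ range (m + 1), ∑ i ∈ range (n + 1), ∑ j ∈ range (m + 1 - k), T3 i k j) =
      ∑ k ∈ Finset.range (min n m + 1),
        poch (-(n : ℝ)) k * poch (-(m : ℝ)) k * poch (β + x) k /
            ((k.factorial : ℝ) * poch β k * poch (β + n) k) * z ^ k *
          meixnerM (n - k) x (β + k) c * meixnerM (m - k) (x - n) (β + n + k) c := by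
    have hT0 : ∀ i k j : ℕ, i ≤ n → n - i < k → T3 i k j = 0 := by
      intro i k j h1 h2
      simp only [hT3def]
      rw [poch_nat_sub i n k h1 h2]
      ring
    have hshrink : (∑ k ∈ range (m + 1), ∑ i ∈ range (n + 1), ∑ j ∈ range (m + 1 - k), T3 i k j)
        = ∑ k ∈ range (min n m + 1), ∑ i ∈ range (n + 1), ∑ j ∈ range (m + 1 - k), T3 i k j := by
      symm
      apply Finset.sum_subset (Finset.range_subset_range.2 (by omega))
      intro k hk1 hk2
      simp only [Finset.mem_range] at hk1 hk2
      apply Finset.sum_eq_zero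
      intro i hi
      simp only [Finset.mem_range] at hi
      exact Finset.sum_eq_zero fun j _ => hT0 i k j (by omega) (by omega)
    rw [hshrink]
    apply Finset.sum_congr rfl
    intro k hk
    have hkmin : k ≤ min n m := by simpa [Nat.lt_succ_iff] using hk
    have hkn : k ≤ n := le_trans hkmin (min_le_left _ _)
    have hkm : k ≤ m := le_trans hkmin (min_le_right _ _)
    have hI : (∑ i ∈ range (n + 1), ∑ j ∈ range (m + 1 - k), T3 i k j)
        = ∑ i ∈ range ((n - k) + 1), ∑ j ∈ range (m + 1 - k), T3 i k j := by
      symm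
      apply Finset.sum_subset (Finset.range_subset_range.2 (by omega))
      intro i hi1 hi2
      simp only [Finset.mem_range] at hi1 hi2
      exact Finset.sum_eq_zero fun j _ => hT0 i k j (by omega) (by omega)
    rw [hI, show m + 1 - k = (m - k) + 1 by omega]
    have hch2 : ∀ j : ℕ, (((k + j).choose k : ℕ) : ℝ) ≠ 0 := fun j =>
      Nat.cast_ne_zero.2 (Nat.choose_pos (Nat.le_add_right k j)).ne'
    have key : ∀ i j : ℕ, T3 i k j =
        poch (-(n : ℝ)) k * poch (-(m : ℝ)) k * poch (β + x) k /
            ((k.factorial : ℝ) * poch β k * poch (β + (n : ℝ)) k) * z ^ k *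
          ((poch ((k : ℝ) - (n : ℝ)) i * poch (-x) i / (poch (β + (k : ℝ)) i * (i.factorial : ℝ)) *
            z ^ i) *
          (poch ((k : ℝ) - (m : ℝ)) j * poch ((n : ℝ) - x) j /
            (poch (β + (n : ℝ) + (k : ℝ)) j * (j.factorial : ℝ)) * z ^ j)) := by
      intro i j
      have h1 : poch (-(n : ℝ)) i * poch ((i : ℝ) - n) k = poch (-(n : ℝ)) k * poch ((k : ℝ) - n) i := by
        have a1 := poch_add (-(n : ℝ)) i k
        have a2 := poch_add (-(n : ℝ)) k i
        rw [show -(n : ℝ) + (i : ℝ) = (i : ℝ) - n by ring] at a1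
        rw [show -(n : ℝ) + (k : ℝ) = (k : ℝ) - n by ring] at a2
        rw [← a1, ← a2, Nat.add_comm]
      have h2 : poch (-(m : ℝ)) (k + j) = poch (-(m : ℝ)) k * poch ((k : ℝ) - m) j := by
        rw [poch_add, show -(m : ℝ) + (k : ℝ) = (k : ℝ) - m by ring]
      have h3 : poch (β + (n : ℝ)) (k + j) = poch (β + (n : ℝ)) k * poch (β + (n : ℝ) + (k : ℝ)) j :=
        poch_add _ _ _
      have h4 : poch β (i + (k + j)) = poch β k * poch (β + (k : ℝ)) i * poch (β + (k : ℝ) + (i : ℝ)) j := by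
        rw [show i + (k + j) = (k + i) + j by omega, poch_add β (k + i) j, poch_add β k i,
          show β + ((k + i : ℕ) : ℝ) = β + (k : ℝ) + (i : ℝ) by push_cast; ring]
      have h5 : poch (β + (i : ℝ) + (k : ℝ)) j = poch (β + (k : ℝ) + (i : ℝ)) j := by
        rw [show β + (i : ℝ) + (k : ℝ) = β + (k : ℝ) + (i : ℝ) by ring]
      have h6 : (((k + j).choose k : ℕ) : ℝ) * (k.factorial : ℝ) * (j.factorial : ℝ) =
          ((k + j).factorial : ℝ) := by
        have h := Nat.choose_mul_factorial_mul_factorial (Nat.le_add_right k j)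
        rw [Nat.add_sub_cancel_left] at h
        exact_mod_cast h
      calc T3 i k j
          = (poch (-(n : ℝ)) i * poch ((i : ℝ) - (n : ℝ)) k) *
          (poch (-(m : ℝ)) (k + j) * poch (-x) i * poch (β + x) k * poch ((n : ℝ) - x) j *
            poch (β + (i : ℝ) + (k : ℝ)) j * (((k + j).choose k : ℕ) : ℝ) /
            ((i.factorial : ℝ) * ((k + j).factorial : ℝ) * poch β (i + (k + j)) *
              poch (β + (n : ℝ)) (k + j)) * z ^ (i + (k + j))) := by
            simp only [hT3def]
            ring
        _ = (poch (-(n : ℝ)) k * poch ((k : ℝ) - (n : ℝ)) i) *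
          (poch (-(m : ℝ)) (k + j) * poch (-x) i * poch (β + x) k * poch ((n : ℝ) - x) j *
            poch (β + (i : ℝ) + (k : ℝ)) j * (((k + j).choose k : ℕ) : ℝ) /
            ((i.factorial : ℝ) * ((k + j).factorial : ℝ) * poch β (i + (k + j)) *
              poch (β + (n : ℝ)) (k + j)) * z ^ (i + (k + j))) := by
            rw [h1]
        _ = (poch (-(n : ℝ)) k * poch ((k : ℝ) - (n : ℝ)) i * poch (-(m : ℝ)) k *
              poch ((k : ℝ) - (m : ℝ)) j * poch (-x) i * poch (β + x) k * poch ((n : ℝ) - x) j *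
              poch (β + (k : ℝ) + (i : ℝ)) j * (((k + j).choose k : ℕ) : ℝ) * z ^ (i + (k + j))) /
            ((i.factorial : ℝ) * ((((k + j).choose k : ℕ) : ℝ) * (k.factorial : ℝ) *
              (j.factorial : ℝ)) *
              (poch β k * poch (β + (k : ℝ)) i * poch (β + (k : ℝ) + (i : ℝ)) j) *
              (poch (β + (n : ℝ)) k * poch (β + (n : ℝ) + (k : ℝ)) j)) := by
            rw [h2, h3, h4, h5, ← h6]
            ring
        _ = (poch (-(n : ℝ)) k * poch (-(m : ℝ)) k * poch (β + x) k * z ^ k *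
              (poch ((k : ℝ) - (n : ℝ)) i * poch (-x) i * z ^ i) *
              (poch ((k : ℝ) - (m : ℝ)) j * poch ((n : ℝ) - x) j * z ^ j)) /
            ((k.factorial : ℝ) * poch β k * poch (β + (n : ℝ)) k *
              (poch (β + (k : ℝ)) i * (i.factorial : ℝ)) *
              (poch (β + (n : ℝ) + (k : ℝ)) j * (j.factorial : ℝ))) := by
            have f1 : poch β k ≠ 0 := hpoch β hβ k
            have f2 : poch (β + (k : ℝ)) i ≠ 0 := hpoch _ (by positivity) i
            have f3 : poch (β + (k : ℝ) + (i : ℝ)) j ≠ 0 := hpoch _ (by positivity) j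
            have f4 : poch (β + (n : ℝ)) k ≠ 0 := hpoch _ (by positivity) k
            have f5 : poch (β + (n : ℝ) + (k : ℝ)) j ≠ 0 := hpoch _ (by positivity) j
            refine (div_eq_div_iff ?_ ?_).mpr ?_
            · repeat' apply mul_ne_zero
              all_goals first | exact hfac _ | exact hch2 j | exact f1 | exact f2 | exact f3 | exact f4 | exact f5
            · repeat' apply mul_ne_zero
              all_goals first | exact hfac _ | exact hch2 j | exact f1 | exact f2 | exact f3 | exact f4 | exact f5
            · ring
        _ = _ := by
          ring
    -- unfold the meixner polynomials on the right
    simp only [meixnerM, ← hz]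
    rw [show -(((n - k : ℕ)) : ℝ) = (k : ℝ) - (n : ℝ) by push_cast [Nat.cast_sub hkn]; ring,
      show -(((m - k : ℕ)) : ℝ) = (k : ℝ) - (m : ℝ) by push_cast [Nat.cast_sub hkm]; ring,
      show -(x - (n : ℝ)) = (n : ℝ) - x by ring]
    rw [mul_assoc, Finset.sum_mul_sum]
    rw [Finset.mul_sum]
    apply Finset.sum_congr rfl
    intro i _
    rw [Finset.mul_sum]
    apply Finset.sum_congr rfl
    intro j _
    exact key i j
  rw [step1, step3]
  calc (∑ i ∈ range (n + 1), ∑ q ∈ range (m + 1), g i q)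
      = ∑ i ∈ range (n + 1), ∑ q ∈ range (m + 1), ∑ k ∈ range (q + 1), T3 i k (q - k) := by
        exact Finset.sum_congr rfl fun i _ => Finset.sum_congr rfl fun q _ => step4 i q
    _ = ∑ i ∈ range (n + 1), ∑ k ∈ range (m + 1), ∑ j ∈ range (m + 1 - k), T3 i k j := by
        exact Finset.sum_congr rfl fun i _ => sum_triangle (fun k j => T3 i k j) m
    _ = ∑ k ∈ range (m + 1), ∑ i ∈ range (n + 1), ∑ j ∈ range (m + 1 - k), T3 i k j :=
        Finset.sum_comm
    _ = _ := step7
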